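/- Let A be a commutative ring, 𝔞 an ideal, and M an A-module. If Tor_i^A(A/𝔞^{k+1}, M) = 0 for all i > 0 and all k ≥ 0, and A/𝔞^{k+1} ⊗_A M is flat over A/𝔞^{k+1} for all k, then Tor_i^A(N, M) = 0 for every i > 0 and every 𝔞-torsion A-module N. -/

import Mathlib

set_option maxHeartbeats 1000000
set_option synthInstance.maxHeartbeats 400000

open CategoryTheory

open scoped TensorProduct

universe u

noncomputable section TorVanishingAux

open LinearMap

variable {A : Type u} [CommRing A]

/-- For modules, subsingleton iff categorically zero. -/
lemma TorVanishing.subsingleton_iff_isZero (K : ModuleCat.{u} A) :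
    Subsingleton K ↔ Limits.IsZero K := by
  constructor
  · intro h; exact ModuleCat.isZero_of_subsingleton K
  · intro h
    refine ⟨fun x y => ?_⟩
    have h1 : (𝟙 K : K ⟶ K) = 0 := h.eq_of_src _ _
    have hz : ∀ z : K, z = 0 := fun z => by
      calc z = (𝟙 K : K ⟶ K) z := rfl
      _ = (0 : K ⟶ K) z := by rw [h1]
      _ = 0 := rfl
    rw [hz x, hz y]

/-- Commutation of `rTensor` and `lTensor`. -/
lemma TorVanishing.comm_rl {X Y Q Q' : Type u} [AddCommGroup X] [Module A X]
    [AddCommGroup Y] [Module A Y] [AddCommGroup Q] [Module A Q] [AddCommGroup Q'] [Module A Q']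
    (q : X →ₗ[A] Y) (d : Q →ₗ[A] Q') (w : X ⊗[A] Q) :
    rTensor Q' q (lTensor X d w) = lTensor Y d (rTensor Q q w) := by
  rw [← LinearMap.comp_apply, rTensor_comp_lTensor, ← lTensor_comp_rTensor, LinearMap.comp_apply]

variable (M : Type u) [AddCommGroup M] [Module A M]

/-- The bridge: `Tor` vanishing is concrete exactness of the tensored resolution. -/
lemma TorVanishing.subsingleton_tor_iff (P : ProjectiveResolution (ModuleCat.of A M))
    (N : Type u) [AddCommGroup N] [Module A N] (i : ℕ) (hi : 0 < i) :
    Subsingleton (((Tor (ModuleCat.{u} A) i).obj (ModuleCat.of A N)).obj (ModuleCat.of A M)) ↔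
    Function.Exact (lTensor N ((P.complex.d (i+1) i).hom : P.complex.X (i+1) →ₗ[A] P.complex.X i))
      (lTensor N ((P.complex.d i (i-1)).hom : P.complex.X i →ₗ[A] P.complex.X (i-1))) := by
  set F := (MonoidalCategory.tensoringLeft (ModuleCat.{u} A)).obj (ModuleCat.of A N) with hF
  have e := P.isoLeftDerivedObj F i
  have heq : (((Tor (ModuleCat.{u} A) i).obj (ModuleCat.of A N)).obj (ModuleCat.of A M)) =
      (F.leftDerived i).obj (ModuleCat.of A M) := rfl
  rw [heq]
  set K := (F.mapHomologicalComplex (ComplexShape.down ℕ)).obj P.complex with hK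
  have h1 : Subsingleton ((F.leftDerived i).obj (ModuleCat.of A M)) ↔ Subsingleton (K.homology i) :=
    Equiv.subsingleton_congr e.toLinearEquiv.toEquiv
  rw [h1, TorVanishing.subsingleton_iff_isZero, ← HomologicalComplex.exactAt_iff_isZero_homology,
    K.exactAt_iff' (i+1) i (i-1) (by simp [ComplexShape.prev])
      (ComplexShape.next_eq' _ (by simp; omega)),
    ShortComplex.moduleCat_exact_iff]
  constructor
  · intro h y
    constructor
    · intro hy; exact h y hy
    · rintro ⟨x, rfl⟩
      show ((K.sc' (i+1) i (i-1)).f ≫ (K.sc' (i+1) i (i-1)).g) x = 0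
      rw [(K.sc' (i+1) i (i-1)).zero]; rfl
  · intro h x hx; exact (h x).mp hx

/-- An element of `N_k ⊗ Q` dying in `N ⊗ Q` dies at a finite stage of a directed union. -/
lemma TorVanishing.rTensor_eq_zero_of_directed_union {N Q : Type u} [AddCommGroup N] [Module A N]
    [AddCommGroup Q] [Module A Q]
    (Nk : ℕ → Submodule A N) (mono : ∀ {c c' : ℕ}, c ≤ c' → Nk c ≤ Nk c')
    (k : ℕ) (z : (Nk k) ⊗[A] Q)
    (hz : rTensor Q (Nk k).subtype z = 0)
    (hunion : ∀ n : N, ∃ c, n ∈ Nk c) :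
    ∃ (k' : ℕ) (h : k ≤ k'), rTensor Q (Submodule.inclusion (mono h)) z = 0 := by
  classical
  set G : ℕ → Type u := fun c => (Nk c)
  set f : ∀ (i j : ℕ), i ≤ j → G i →ₗ[A] G j := fun i j h => Submodule.inclusion (mono h) with hf
  haveI : IsDirected ℕ (fun x1 x2 => x1 ≤ x2) := ⟨fun a b => ⟨a ⊔ b, le_sup_left, le_sup_right⟩⟩
  haveI : DirectedSystem G (fun i j h => ⇑(f i j h)) := by
    constructor
    · intro i x; rfl
    · intro i j k hij hjk x; rfl
  haveI : DirectedSystem (fun c => G c ⊗[A] Q) (fun i j h => ⇑(rTensor Q (f i j h))) := by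
    constructor
    · intro i x
      have : f i i le_rfl = LinearMap.id := by ext; rfl
      rw [this, rTensor_id]; rfl
    · intro i j l hij hjl x
      rw [← LinearMap.comp_apply, ← rTensor_comp]
      congr 1
  set ulin : Module.DirectLimit G f →ₗ[A] N :=
    Module.DirectLimit.lift A ℕ G f (fun c => (Nk c).subtype) (fun i j hij x => rfl) with hu
  have hulin : ∀ (c : ℕ) (x : G c), ulin (Module.DirectLimit.of A ℕ G f c x) = (x : N) := by
    intro c x; rw [hu]; exact Module.DirectLimit.lift_of _ _ x
  have hinj : Function.Injective ulin := by
    intro z₁ z₂ h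
    obtain ⟨c₁, x₁, rfl⟩ := Module.DirectLimit.exists_of z₁
    obtain ⟨c₂, x₂, rfl⟩ := Module.DirectLimit.exists_of z₂
    obtain ⟨c, hc₁, hc₂⟩ := directed_of (· ≤ ·) c₁ c₂
    rw [← Module.DirectLimit.of_f (hij := hc₁), ← Module.DirectLimit.of_f (hij := hc₂)] at h ⊢
    congr 1
    apply Subtype.ext
    rw [← hulin c ((f c₁ c hc₁) x₁), ← hulin c ((f c₂ c hc₂) x₂)]
    exact h
  have hsurj : Function.Surjective ulin := by
    intro n
    obtain ⟨c, hc⟩ := hunion n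
    refine ⟨Module.DirectLimit.of A ℕ G f c ⟨n, hc⟩, ?_⟩
    rw [hulin c ⟨n, hc⟩]
  set uEquiv : Module.DirectLimit G f ≃ₗ[A] N := LinearEquiv.ofBijective ulin ⟨hinj, hsurj⟩
  set ψ : Module.DirectLimit (fun c => G c ⊗[A] Q) (fun i j h => rTensor Q (f i j h)) ≃ₗ[A] N ⊗[A] Q :=
    (TensorProduct.directLimitLeft f Q).symm.trans (TensorProduct.congr uEquiv (LinearEquiv.refl A Q))
  have key : ψ.toLinearMap.comp
      (Module.DirectLimit.of A ℕ (fun c => G c ⊗[A] Q) (fun i j h => rTensor Q (f i j h)) k)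
        = rTensor Q (Nk k).subtype := by
    apply TensorProduct.ext'
    intro n q
    show ψ (Module.DirectLimit.of A ℕ (fun c => G c ⊗[A] Q) (fun i j h => rTensor Q (f i j h)) k (n ⊗ₜ q)) = _
    simp only [ψ, LinearEquiv.trans_apply, TensorProduct.directLimitLeft_symm_of_tmul,
      TensorProduct.congr_tmul, LinearEquiv.refl_apply, LinearEquiv.ofBijective_apply,
      Module.DirectLimit.lift_of, rTensor_tmul]
    rw [show (uEquiv ((Module.DirectLimit.of A ℕ G f k) n)) = ((n : N)) from hulin k n]
    rfl
  have h0 : Module.DirectLimit.of A ℕ (fun c => G c ⊗[A] Q) (fun i j h => rTensor Q (f i j h)) k z = 0 := by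
    apply ψ.injective
    rw [map_zero, ← hz, ← key]; rfl
  obtain ⟨k', hk', hzero⟩ := Module.DirectLimit.of.zero_exact h0
  exact ⟨k', hk', hzero⟩

/-- Flat base change: injections of `A/I`-modules stay injective after `⊗[A] M`,
provided `(A/I) ⊗ M` is flat over `A/I`. -/
lemma TorVanishing.rTensor_injective_of_isTorsionBy {I : Ideal A}
    (hflat : Module.Flat (A ⧸ I) ((A ⧸ I) ⊗[A] M))
    {K F : Type u} [AddCommGroup K] [Module A K] [AddCommGroup F] [Module A F]
    (hK : Module.IsTorsionBySet A K (I : Set A)) (hF : Module.IsTorsionBySet A F (I : Set A))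
    {f : K →ₗ[A] F} (hf : Function.Injective f) :
    Function.Injective (rTensor M f) := by
  letI : Module (A ⧸ I) K := hK.module
  letI : Module (A ⧸ I) F := hF.module
  letI : IsScalarTower A (A ⧸ I) K := hK.isScalarTower
  letI : IsScalarTower A (A ⧸ I) F := hF.isScalarTower
  set fB : K →ₗ[A ⧸ I] F :=
    { toFun := f
      map_add' := fun x y => map_add f x y
      map_smul' := fun r x => by
        obtain ⟨r, rfl⟩ := Ideal.Quotient.mk_surjective r
        show f ((Ideal.Quotient.mk I r) • x) = (Ideal.Quotient.mk I r) • f x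
        rw [hK.mk_smul, map_smul, hF.mk_smul] } with hfB
  set γK := TensorProduct.AlgebraTensorModule.cancelBaseChange A (A ⧸ I) (A ⧸ I) K M
  set γF := TensorProduct.AlgebraTensorModule.cancelBaseChange A (A ⧸ I) (A ⧸ I) F M
  haveI := hflat
  have hg : Function.Injective (rTensor ((A ⧸ I) ⊗[A] M) fB) :=
    Module.Flat.rTensor_preserves_injective_linearMap (M := (A ⧸ I) ⊗[A] M) fB hf
  have key : ∀ y : K ⊗[A ⧸ I] ((A ⧸ I) ⊗[A] M),
      rTensor M f (γK y) = γF (rTensor ((A ⧸ I) ⊗[A] M) fB y) := by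
    intro y
    induction y with
    | zero => simp
    | add y₁ y₂ h₁ h₂ => simp [map_add, h₁, h₂]
    | tmul x w =>
      induction w with
      | zero => simp [TensorProduct.tmul_zero]
      | add w₁ w₂ h₁ h₂ => simp only [TensorProduct.tmul_add, map_add, h₁, h₂]
      | tmul b m =>
        simp only [γK, γF, TensorProduct.AlgebraTensorModule.cancelBaseChange_tmul, rTensor_tmul]
        exact congrArg (· ⊗ₜ[A] m) (fB.map_smul b x)
  intro u v huv
  have h1 : γF (rTensor ((A ⧸ I) ⊗[A] M) fB (γK.symm u)) =
      γF (rTensor ((A ⧸ I) ⊗[A] M) fB (γK.symm v)) := by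
    rw [← key, ← key, γK.apply_symm_apply, γK.apply_symm_apply, huv]
  have h2 := hg (γF.injective h1)
  calc u = γK (γK.symm u) := (γK.apply_symm_apply u).symm
  _ = γK (γK.symm v) := by rw [h2]
  _ = v := γK.apply_symm_apply v

/-- Exactness of `(σ →₀ B) ⊗ -` in the middle, from exactness of `B ⊗ -`. -/
lemma TorVanishing.exact_lTensor_finsupp (σ : Type u) (B X Y Z : Type u)
    [AddCommGroup B] [Module A B] [AddCommGroup X] [Module A X] [AddCommGroup Y] [Module A Y]
    [AddCommGroup Z] [Module A Z]
    (d1 : X →ₗ[A] Y) (d0 : Y →ₗ[A] Z) (hd : d0.comp d1 = 0)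
    (hB : Function.Exact (lTensor B d1) (lTensor B d0)) :
    Function.Exact (lTensor (σ →₀ B) d1) (lTensor (σ →₀ B) d0) := by
  classical
  have comm : ∀ (X' Y' : Type u) (_ : AddCommGroup X') (_ : AddCommGroup Y'),
      ∀ (_ : Module A X') (_ : Module A Y'),
      ∀ (d : X' →ₗ[A] Y') (w : (σ →₀ B) ⊗[A] X') (s : σ),
      TensorProduct.finsuppLeft A A B Y' σ (lTensor _ d w) s
        = lTensor B d (TensorProduct.finsuppLeft A A B X' σ w s) := by
    intro X' Y' _ _ _ _ d w s
    rw [TensorProduct.finsuppLeft_apply, TensorProduct.finsuppLeft_apply,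
      ← LinearMap.comp_apply, rTensor_comp_lTensor, ← lTensor_comp_rTensor, LinearMap.comp_apply]
  intro w
  constructor
  · intro hw
    set v := TensorProduct.finsuppLeft A A B Y σ w with hv
    have hvs : ∀ s, lTensor B d0 (v s) = 0 := fun s => by
      rw [hv, ← comm _ _ _ _ _ _ d0 w s, hw, map_zero]
      rfl
    set φ : B ⊗[A] Y → B ⊗[A] X := fun t =>
      if h2 : lTensor B d0 t = 0 then
        if h1 : t = 0 then 0 else ((hB t).mp h2).choose
      else 0 with hφ
    have hφ0 : φ 0 = 0 := by simp [hφ]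
    have hφspec : ∀ t, lTensor B d0 t = 0 → lTensor B d1 (φ t) = t := by
      intro t ht
      by_cases h1 : t = 0
      · simp [hφ, h1]
      · have hc := ((hB t).mp ht).choose_spec
        simp only [hφ, dif_pos ht, dif_neg h1]
        exact hc
    refine ⟨(TensorProduct.finsuppLeft A A B X σ).symm (Finsupp.mapRange φ hφ0 v), ?_⟩
    apply (TensorProduct.finsuppLeft A A B Y σ).injective
    ext s
    rw [comm _ _ _ _ _ _ d1 _ s, LinearEquiv.apply_symm_apply, Finsupp.mapRange_apply,
      hφspec (v s) (hvs s)]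
  · rintro ⟨t, rfl⟩
    rw [← LinearMap.comp_apply, ← lTensor_comp, hd, lTensor_zero]
    rfl

/-- The main diagram chase. -/
lemma TorVanishing.chase {N F K Pi1 Pi Pim E : Type u}
    [AddCommGroup N] [Module A N] [AddCommGroup F] [Module A F] [AddCommGroup K] [Module A K]
    [AddCommGroup Pi1] [Module A Pi1] [AddCommGroup Pi] [Module A Pi]
    [AddCommGroup Pim] [Module A Pim] [AddCommGroup E] [Module A E]
    (d1 : Pi1 →ₗ[A] Pi) (d0 : Pi →ₗ[A] Pim) (e : Pim →ₗ[A] E)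
    (p : F →ₗ[A] N) (hp : Function.Surjective p)
    (ι : K →ₗ[A] F) (hexactKF : Function.Exact ι p)
    (hF : Function.Exact (lTensor F d1) (lTensor F d0))
    (hK : Function.Exact (lTensor K d0) (lTensor K e))
    (hed0 : e.comp d0 = 0)
    (hιE : Function.Injective (rTensor E ι)) :
    ∀ x : N ⊗[A] Pi, lTensor N d0 x = 0 → x ∈ Set.range (lTensor N d1) := by
  intro x hx
  obtain ⟨y, rfl⟩ := rTensor_surjective Pi (g := p) hp x
  have h1 : rTensor Pim p (lTensor F d0 y) = 0 := by
    rw [TorVanishing.comm_rl p d0 y]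
    exact hx
  obtain ⟨z, hz⟩ := (rTensor_exact Pim hexactKF hp (lTensor F d0 y)).mp h1
  have h2 : lTensor K e z = 0 := by
    apply hιE
    rw [map_zero, TorVanishing.comm_rl ι e z, hz, ← LinearMap.comp_apply, ← lTensor_comp, hed0,
      lTensor_zero]
    rfl
  obtain ⟨w, hw⟩ := (hK z).mp h2
  have h3 : lTensor F d0 (y - rTensor Pi ι w) = 0 := by
    rw [map_sub, ← TorVanishing.comm_rl ι d0 w, hw, hz, sub_self]
  obtain ⟨u, hu⟩ := (hF (y - rTensor Pi ι w)).mp h3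
  refine ⟨rTensor Pi1 p u, ?_⟩
  have hpι : p.comp ι = 0 := by
    ext t
    exact (hexactKF (ι t)).mpr ⟨t, rfl⟩
  rw [← TorVanishing.comm_rl p d1 u, hu, map_sub, ← LinearMap.comp_apply (rTensor Pi p),
    ← rTensor_comp, hpι, rTensor_zero]
  simp

end TorVanishingAux

section StepA

variable {A : Type u} [CommRing A] (a : Ideal A)
variable (M : Type u) [AddCommGroup M] [Module A M]

open LinearMap

lemma TorVanishing.isTorsionBySet_quotient_pow (k : ℕ) :
    Module.IsTorsionBySet A (A ⧸ a ^ (k+1)) ((a ^ (k+1) : Ideal A) : Set A) := by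
  intro x r
  obtain ⟨r, hr⟩ := r
  obtain ⟨b, rfl⟩ := Ideal.Quotient.mk_surjective x
  show r • (Ideal.Quotient.mk (a ^ (k+1)) b) = 0
  rw [Algebra.smul_def, Ideal.Quotient.algebraMap_eq,
    Ideal.Quotient.eq_zero_iff_mem.mpr hr, zero_mul]

lemma TorVanishing.isTorsionBySet_finsupp {I : Ideal A} {B : Type u} [AddCommGroup B] [Module A B]
    (hB : Module.IsTorsionBySet A B (I : Set A)) (σ : Type u) :
    Module.IsTorsionBySet A (σ →₀ B) ((I : Ideal A) : Set A) := by
  intro x r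
  ext s
  show r.1 • (x s) = 0
  exact @hB (x s) r

/-- The surjection `(N →₀ A/a^(k+1)) → N` for a module `N` killed by `a^(k+1)`. -/
lemma TorVanishing.exists_surjection (k : ℕ) (N : Type u) [AddCommGroup N] [Module A N]
    (hN : Module.IsTorsionBySet A N ((a ^ (k+1) : Ideal A) : Set A)) :
    ∃ p : (N →₀ (A ⧸ a ^ (k+1))) →ₗ[A] N, Function.Surjective p := by
  letI : Module (A ⧸ a ^ (k+1)) N := hN.module
  letI : IsScalarTower A (A ⧸ a ^ (k+1)) N := hN.isScalarTower
  set comp : N → ((A ⧸ a ^ (k+1)) →ₗ[A] N) := fun n =>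
    { toFun := fun b => b • n
      map_add' := fun b₁ b₂ => by
        show (b₁ + b₂) • n = b₁ • n + b₂ • n
        rw [add_smul]
      map_smul' := fun r b => by
        show (r • b) • n = r • (b • n)
        rw [smul_assoc] } with hcomp
  refine ⟨Finsupp.lsum ℕ comp, fun n => ⟨Finsupp.single n 1, ?_⟩⟩
  rw [Finsupp.lsum_single]
  show (1 : A ⧸ a ^ (k+1)) • n = n
  rw [one_smul]

lemma TorVanishing.flat_rTensor_inj {E K F : Type u} [AddCommGroup E] [Module A E]
    [AddCommGroup K] [Module A K] [AddCommGroup F] [Module A F]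
    (hE : Module.Projective A E) (ι : K →ₗ[A] F) (hι : Function.Injective ι) :
    Function.Injective (rTensor E ι) := by
  haveI := hE
  exact Module.Flat.rTensor_preserves_injective_linearMap (M := E) ι hι

lemma TorVanishing.stepA_core
    (P : ProjectiveResolution (ModuleCat.of A M))
    (I : Ideal A) (B : Type u) [AddCommGroup B] [Module A B]
    (hflatI : Module.Flat (A ⧸ I) ((A ⧸ I) ⊗[A] M))
    (hBtors : Module.IsTorsionBySet A B (I : Set A))
    (hBexact : ∀ i, 0 < i → Function.Exact
      (lTensor B ((P.complex.d (i+1) i).hom : P.complex.X (i+1) →ₗ[A] P.complex.X i))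
      (lTensor B ((P.complex.d i (i-1)).hom : P.complex.X i →ₗ[A] P.complex.X (i-1))))
    (hpres : ∀ (N' : Type u) [AddCommGroup N'] [Module A N'],
      Module.IsTorsionBySet A N' (I : Set A) →
      ∃ p : (N' →₀ B) →ₗ[A] N', Function.Surjective p) :
    ∀ (j : ℕ) (N : Type u) [AddCommGroup N] [Module A N],
      Module.IsTorsionBySet A N (I : Set A) →
      Function.Exact
        (lTensor N ((P.complex.d (j+2) (j+1)).hom : P.complex.X (j+2) →ₗ[A] P.complex.X (j+1)))
        (lTensor N ((P.complex.d (j+1) j).hom : P.complex.X (j+1) →ₗ[A] P.complex.X j)) := by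
  have hdd : ∀ (j : ℕ),
      (((P.complex.d (j+1) j).hom : P.complex.X (j+1) →ₗ[A] P.complex.X j)).comp
        ((P.complex.d (j+2) (j+1)).hom : _ →ₗ[A] _) = 0 := fun j => by rw [← ModuleCat.hom_comp, P.complex.d_comp_d]; rfl
  have hεsurj : Function.Surjective ((P.π.f 0).hom : P.complex.X 0 →ₗ[A] M) := by
    exact (ModuleCat.epi_iff_surjective _).mp inferInstance
  have hd0ε : Function.Exact ((P.complex.d 1 0).hom : P.complex.X 1 →ₗ[A] P.complex.X 0)
      ((P.π.f 0).hom : P.complex.X 0 →ₗ[A] M) := by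
    have h := P.exact₀
    rw [ShortComplex.moduleCat_exact_iff] at h
    intro y
    constructor
    · intro hy; exact h y hy
    · rintro ⟨x, rfl⟩
      have hc := P.complex_d_comp_π_f_zero
      calc ((P.π.f 0).hom : P.complex.X 0 →ₗ[A] M) ((P.complex.d 1 0).hom x)
          = (P.complex.d 1 0 ≫ P.π.f 0).hom x := rfl
        _ = 0 := by rw [hc]; rfl
  have hεd0 : (((P.π.f 0).hom : P.complex.X 0 →ₗ[A] M)).comp
      ((P.complex.d 1 0).hom : P.complex.X 1 →ₗ[A] P.complex.X 0) = 0 := by rw [← ModuleCat.hom_comp, P.complex_d_comp_π_f_zero]; rfl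
  intro j
  induction j with
  | zero =>
    intro N _ _ hN
    obtain ⟨p, hp⟩ := hpres N hN
    have hKtors : Module.IsTorsionBySet A (LinearMap.ker p) (I : Set A) := by
      intro x r
      apply Subtype.ext
      show r.1 • (x : N →₀ B) = 0
      exact TorVanishing.isTorsionBySet_finsupp hBtors N (x := (x : N →₀ B)) (a := r)
    have hchase := TorVanishing.chase (A := A)
      ((P.complex.d 2 1).hom : P.complex.X 2 →ₗ[A] P.complex.X 1)
      ((P.complex.d 1 0).hom : P.complex.X 1 →ₗ[A] P.complex.X 0)
      ((P.π.f 0).hom : P.complex.X 0 →ₗ[A] M)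
      p hp (LinearMap.ker p).subtype (LinearMap.exact_subtype_ker_map p)
      (TorVanishing.exact_lTensor_finsupp N B _ _ _ _ _ (hdd 0) (hBexact 1 one_pos))
      (lTensor_exact (LinearMap.ker p) hd0ε hεsurj)
      hεd0
      (TorVanishing.rTensor_injective_of_isTorsionBy M hflatI hKtors
        (TorVanishing.isTorsionBySet_finsupp hBtors N) (LinearMap.ker p).injective_subtype)
    intro x
    constructor
    · intro hx; exact hchase x hx
    · rintro ⟨t, rfl⟩
      rw [← LinearMap.comp_apply, ← lTensor_comp, hdd 0, lTensor_zero]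
      rfl
  | succ m IH =>
    intro N _ _ hN
    obtain ⟨p, hp⟩ := hpres N hN
    have hKtors : Module.IsTorsionBySet A (LinearMap.ker p) (I : Set A) := by
      intro x r
      apply Subtype.ext
      show r.1 • (x : N →₀ B) = 0
      exact TorVanishing.isTorsionBySet_finsupp hBtors N (x := (x : N →₀ B)) (a := r)
    have hchase := TorVanishing.chase (A := A)
      ((P.complex.d (m+3) (m+2)).hom : P.complex.X (m+3) →ₗ[A] P.complex.X (m+2))
      ((P.complex.d (m+2) (m+1)).hom : P.complex.X (m+2) →ₗ[A] P.complex.X (m+1))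
      ((P.complex.d (m+1) m).hom : P.complex.X (m+1) →ₗ[A] P.complex.X m)
      p hp (LinearMap.ker p).subtype (LinearMap.exact_subtype_ker_map p)
      (TorVanishing.exact_lTensor_finsupp N B _ _ _ _ _ (hdd (m+1)) (hBexact (m+2) (by omega)))
      (IH (LinearMap.ker p) hKtors)
      (hdd m)
      (TorVanishing.flat_rTensor_inj ((IsProjective.iff_projective.{u,u} (P.complex.X m)).mpr (P.projective m))
        (LinearMap.ker p).subtype (LinearMap.ker p).injective_subtype)
    intro x
    constructor
    · intro hx; exact hchase x hx
    · rintro ⟨t, rfl⟩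
      rw [← LinearMap.comp_apply, ← lTensor_comp, hdd (m+1), lTensor_zero]
      rfl

end StepA


/-- If `Tor_i^A(A/𝔞^{k+1}, M) = 0` for all `i > 0` and `k ≥ 0`, and each
`A/𝔞^{k+1} ⊗_A M` is flat over `A/𝔞^{k+1}`, then `Tor_i^A(N, M) = 0` for every `i > 0`
and every `𝔞`-torsion module `N`. -/
theorem tor_vanishing_of_quotients_flat {A : Type u} [CommRing A] (a : Ideal A)
    (M : Type u) [AddCommGroup M] [Module A M]
    (htor : ∀ i > 0, ∀ k : ℕ,
      Subsingleton (((Tor (ModuleCat.{u} A) i).obj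
        (ModuleCat.of A (A ⧸ a ^ (k + 1)))).obj (ModuleCat.of A M)))
    (hflat : ∀ k : ℕ, Module.Flat (A ⧸ a ^ (k + 1)) ((A ⧸ a ^ (k + 1)) ⊗[A] M)) :
    ∀ i > 0, ∀ (N : Type u) [AddCommGroup N] [Module A N],
      (∀ n : N, ∃ m : ℕ, ∀ r ∈ a ^ m, r • n = 0) →
      Subsingleton (((Tor (ModuleCat.{u} A) i).obj
        (ModuleCat.of A N)).obj (ModuleCat.of A M)) := by
  classical
  intro i hi N _ _ hN
  have P : ProjectiveResolution (ModuleCat.of A M) := HasProjectiveResolution.out.some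
  rw [TorVanishing.subsingleton_tor_iff M P N i hi]
  have htorE : ∀ i', 0 < i' → ∀ k : ℕ, Function.Exact
      (LinearMap.lTensor (A ⧸ a ^ (k+1))
        ((P.complex.d (i'+1) i').hom : P.complex.X (i'+1) →ₗ[A] P.complex.X i'))
      (LinearMap.lTensor (A ⧸ a ^ (k+1))
        ((P.complex.d i' (i'-1)).hom : P.complex.X i' →ₗ[A] P.complex.X (i'-1))) := fun i' hi' k =>
    (TorVanishing.subsingleton_tor_iff M P _ i' hi').mp (htor i' hi' k)
  have stepA := fun (k : ℕ) => TorVanishing.stepA_core M P (a ^ (k+1)) (A ⧸ a ^ (k+1))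
    (hflat k) (TorVanishing.isTorsionBySet_quotient_pow a k)
    (fun i' hi' => htorE i' hi' k) (TorVanishing.exists_surjection a k)
  obtain ⟨j, rfl⟩ : ∃ j, i = j + 1 := ⟨i - 1, by omega⟩
  show Function.Exact
    (LinearMap.lTensor N ((P.complex.d (j+2) (j+1)).hom : P.complex.X (j+2) →ₗ[A] P.complex.X (j+1)))
    (LinearMap.lTensor N ((P.complex.d (j+1) j).hom : P.complex.X (j+1) →ₗ[A] P.complex.X j))
  intro x
  constructor
  · intro hx
    set Nk : ℕ → Submodule A N := fun c =>
      { carrier := {n | ∀ r ∈ a ^ c, r • n = 0}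
        add_mem' := fun {n₁ n₂} h₁ h₂ r hr => by rw [smul_add, h₁ r hr, h₂ r hr, add_zero]
        zero_mem' := fun r _ => smul_zero r
        smul_mem' := fun s n hn r hr => by rw [smul_comm, hn r hr, smul_zero] } with hNk
    have mono : ∀ {c c' : ℕ}, c ≤ c' → Nk c ≤ Nk c' := by
      intro c c' hcc n hn r hr
      exact hn r (Ideal.pow_le_pow_right hcc hr)
    have hunion : ∀ n : N, ∃ c, n ∈ Nk c := fun n => hN n
    obtain ⟨S, hS⟩ := TensorProduct.exists_finset x
    set c₀ : ℕ := (S.sup fun t => (hN t.1).choose) + 1 with hc₀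
    have hmem : ∀ t ∈ S, t.1 ∈ Nk c₀ := by
      intro t ht r hr
      exact (hN t.1).choose_spec r
        (Ideal.pow_le_pow_right (le_trans (Finset.le_sup ht) (Nat.le_succ _)) hr)
    set x' : (Nk c₀ : Submodule A N) ⊗[A] (P.complex.X (j+1) : Type u) :=
      ∑ t ∈ S.attach, (⟨t.1.1, hmem t.1 t.2⟩ : Nk c₀) ⊗ₜ[A] t.1.2 with hx'def
    have hx'lift : LinearMap.rTensor (P.complex.X (j+1) : Type u) (Nk c₀).subtype x' = x := by
      rw [hx'def, map_sum]
      have heach : ∀ t ∈ S.attach,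
          LinearMap.rTensor (P.complex.X (j+1) : Type u) (Nk c₀).subtype
            ((⟨t.1.1, hmem t.1 t.2⟩ : Nk c₀) ⊗ₜ[A] t.1.2) = t.1.1 ⊗ₜ[A] t.1.2 := fun t _ => by
        rw [LinearMap.rTensor_tmul]; rfl
      rw [Finset.sum_congr rfl heach, Finset.sum_attach S (fun t => t.1 ⊗ₜ[A] t.2)]
      exact hS.symm
    obtain ⟨c₁, hc₁, hz1⟩ := TorVanishing.rTensor_eq_zero_of_directed_union Nk mono c₀
      (LinearMap.lTensor _ ((P.complex.d (j+1) j).hom : P.complex.X (j+1) →ₗ[A] P.complex.X j) x')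
      (by rw [TorVanishing.comm_rl, hx'lift]; exact hx) hunion
    have hx''0 : LinearMap.lTensor (Nk c₁ : Submodule A N)
        ((P.complex.d (j+1) j).hom : P.complex.X (j+1) →ₗ[A] P.complex.X j)
        (LinearMap.rTensor (P.complex.X (j+1) : Type u) (Submodule.inclusion (mono hc₁)) x') = 0 := by
      rw [← TorVanishing.comm_rl]
      exact hz1
    have hc₁pos : 1 ≤ c₁ := le_trans (by omega) hc₁
    have htors : Module.IsTorsionBySet A (Nk c₁ : Submodule A N)
        (((a ^ ((c₁-1)+1)) : Ideal A) : Set A) := by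
      intro y r
      apply Subtype.ext
      show (r : A) • (y : N) = 0
      exact y.2 _ (Ideal.pow_le_pow_right (by omega) r.2)
    obtain ⟨u, hu⟩ := ((stepA (c₁-1) j (Nk c₁ : Submodule A N) htors)
      (LinearMap.rTensor (P.complex.X (j+1) : Type u) (Submodule.inclusion (mono hc₁)) x')).mp hx''0
    refine ⟨LinearMap.rTensor (P.complex.X (j+2) : Type u) (Nk c₁).subtype u, ?_⟩
    rw [← TorVanishing.comm_rl, hu, ← LinearMap.comp_apply, ← LinearMap.rTensor_comp,
      Submodule.subtype_comp_inclusion, hx'lift]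
  · rintro ⟨t, rfl⟩
    rw [← LinearMap.comp_apply, ← LinearMap.lTensor_comp,
      show (((P.complex.d (j+1) j).hom : P.complex.X (j+1) →ₗ[A] P.complex.X j)).comp
        ((P.complex.d (j+2) (j+1)).hom : P.complex.X (j+2) →ₗ[A] P.complex.X (j+1)) = 0
        from by rw [← ModuleCat.hom_comp, P.complex.d_comp_d]; rfl,
      LinearMap.lTensor_zero]
    rfl
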